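/- Let X be an isometrically homogeneous metric space and L a level set. Then the canonical L-tower T_X^L of X is homogeneous: for any two elements at the same level and any lower level ℓ, they have the same number of predecessors at level ℓ. Concretely, for any x, y ∈ X and λ ∈ L, ℓ ∈ L with ℓ ≤ λ, the number of ℓ-connected components contained in C_λ(x) equals the number contained in C_λ(y). -/

import Mathlib

/-- The `s`-connected component of `x`. -/
def chainComp {X : Type*} [MetricSpace X] (s : ℝ) (x : X) : Set X :=
  {y | Relation.ReflTransGen (fun a b => dist a b ≤ s) x y}

lemma chainComp_mem_map {X : Type*} [MetricSpace X] (e : X ≃ᵢ X) (s : ℝ) (z w : X)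
    (h : w ∈ chainComp s z) : e w ∈ chainComp s (e z) := by
  exact Relation.ReflTransGen.lift e (fun a b hab => by
    simpa [Function.onFun, e.isometry.dist_eq] using hab) _ _ h

lemma chainComp_map {X : Type*} [MetricSpace X] (e : X ≃ᵢ X) (s : ℝ) (z : X) :
    e '' chainComp s z = chainComp s (e z) := by
  ext w
  constructor
  · rintro ⟨v, hv, rfl⟩
    exact chainComp_mem_map e s z v hv
  · intro hw
    refine ⟨e.symm w, ?_, by simp⟩
    have := chainComp_mem_map e.symm s (e z) w hw
    simpa using this

/-- If `X` is an isometrically homogeneous metric space and `L` is a level set, the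
canonical `L`-tower of `X` is homogeneous: for any `x, y ∈ X` and levels `ℓ ≤ λ` in
`L`, the number of `ℓ`-connected components contained in `C_λ(x)` equals the number
of `ℓ`-connected components contained in `C_λ(y)`. -/
theorem canonTower_homogeneous {X : Type*} [MetricSpace X] (L : Set ℝ)
    (hhom : ∀ x y : X, ∃ f : X → X, Function.Bijective f ∧ Isometry f ∧ f x = y)
    (x y : X) (lam ell : ℝ) (hlam : lam ∈ L) (hell : ell ∈ L) (hle : ell ≤ lam) :
    Cardinal.mk {C : Set X // ∃ z ∈ chainComp lam x, C = chainComp ell z} =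
      Cardinal.mk {C : Set X // ∃ z ∈ chainComp lam y, C = chainComp ell z} := by
  obtain ⟨f, hbij, hisom, hfx⟩ := hhom x y
  let e : X ≃ᵢ X := ⟨Equiv.ofBijective f hbij, hisom⟩
  have he : e x = y := hfx
  apply Cardinal.mk_congr
  refine ⟨fun C => ⟨e '' C.1, ?_⟩, fun C => ⟨e.symm '' C.1, ?_⟩, ?_, ?_⟩
  · obtain ⟨z, hz, hC⟩ := C.2
    exact ⟨e z, he ▸ chainComp_mem_map e lam x z hz, by rw [hC, chainComp_map]⟩
  · obtain ⟨z, hz, hC⟩ := C.2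
    refine ⟨e.symm z, ?_, by rw [hC, chainComp_map]⟩
    have := chainComp_mem_map e.symm lam y z hz
    rwa [← he, e.symm_apply_apply] at this
  · intro C; ext w; simp
  · intro C; ext w; simp
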